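/- For every real ξ, one has ∫_ℝ e^{−i x ξ} ( 240 sech³(x) − 3720 sech⁵(x) + 9960 sech⁷(x) − 6720 sech⁹(x) ) dx = (π/6) (1 − ξ²) ξ² (1 + ξ²)² sech(π ξ / 2). In particular, this Fourier transform vanishes at ξ = 1 and ξ = −1. -/

import Mathlib

open MeasureTheory Real

noncomputable def sech (x : ℝ) : ℝ := (Real.cosh x)⁻¹

lemma sech_pos (x : ℝ) : 0 < sech x := inv_pos.mpr (Real.cosh_pos x)

lemma sech_le_one (x : ℝ) : sech x ≤ 1 := by
  rw [sech, inv_le_one_iff₀]; right; exact Real.one_le_cosh x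

lemma sech_le (x : ℝ) : sech x ≤ 2 * Real.exp (-|x|) := by
  have h2 : Real.exp |x| / 2 ≤ Real.cosh x := by
    rw [Real.cosh_eq]
    rcases abs_cases x with ⟨h, _⟩ | ⟨h, _⟩ <;> rw [h] <;>
      nlinarith [(Real.exp_pos x).le, (Real.exp_pos (-x)).le]
  have h3 : (Real.cosh x)⁻¹ ≤ (Real.exp |x| / 2)⁻¹ :=
    inv_anti₀ (by positivity) h2
  rw [sech]
  calc (Real.cosh x)⁻¹ ≤ (Real.exp |x| / 2)⁻¹ := h3
    _ = 2 * Real.exp (-|x|) := by rw [Real.exp_neg]; field_simp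

lemma sech_pow_le {n : ℕ} (hn : 1 ≤ n) (x : ℝ) : sech x ^ n ≤ 2 * Real.exp (-|x|) := by
  calc sech x ^ n ≤ sech x ^ 1 :=
        pow_le_pow_of_le_one (sech_pos x).le (sech_le_one x) hn
    _ = sech x := pow_one _
    _ ≤ _ := sech_le x

lemma continuous_sech : Continuous sech :=
  Real.continuous_cosh.inv₀ fun x => (Real.cosh_pos x).ne'

lemma integrable_two_exp_neg_abs : Integrable (fun x : ℝ => 2 * Real.exp (-|x|)) := by
  have h1 : IntegrableOn (fun x : ℝ => Real.exp (-|x|)) (Set.Ioi 0) := by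
    refine (exp_neg_integrableOn_Ioi 0 one_pos).congr_fun (fun x hx => ?_) measurableSet_Ioi
    rw [abs_of_pos hx]; ring_nf
  have h2 : IntegrableOn (fun x : ℝ => Real.exp (-|x|)) (Set.Iic 0) := by
    have m : MeasurableEmbedding fun x : ℝ => -x :=
      (Homeomorph.neg ℝ).measurableEmbedding
    rw [← Measure.map_neg_eq_self (volume : Measure ℝ), IntegrableOn, m.restrict_map,
      m.integrable_map_iff]
    simp only [Function.comp_def, abs_neg, Set.neg_preimage, Set.neg_Iic, neg_zero]
    exact (integrableOn_Ici_iff_integrableOn_Ioi).mpr h1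
  have : Integrable (fun x : ℝ => Real.exp (-|x|)) := by
    rw [← integrableOn_univ, ← Set.Iic_union_Ioi (a := (0:ℝ))]
    exact h2.union h1
  exact this.const_mul 2

/-- Integrability from a `C * exp (-|x|)` bound. -/
lemma integrable_of_bound {F : ℝ → ℂ} (hc : Continuous F) (C : ℝ)
    (hb : ∀ x, ‖F x‖ ≤ C * (2 * Real.exp (-|x|))) : Integrable F := by
  refine Integrable.mono' (integrable_two_exp_neg_abs.const_mul C)
    hc.aestronglyMeasurable ?_
  filter_upwards with x using by simpa [mul_assoc] using hb x

lemma hasDerivAt_sech (x : ℝ) : HasDerivAt sech (-(Real.sinh x * sech x ^ 2)) x := by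
  have h : HasDerivAt (fun x => (Real.cosh x)⁻¹) _ x := (Real.hasDerivAt_cosh x).inv (Real.cosh_pos x).ne'
  convert h using 1
  · rfl
  rw [sech]; field_simp

lemma abs_sinh_le_cosh (x : ℝ) : |Real.sinh x| ≤ Real.cosh x := by
  nlinarith [Real.cosh_sq_sub_sinh_sq x, Real.cosh_pos x, sq_abs (Real.sinh x),
    abs_nonneg (Real.sinh x)]

lemma hasDerivAt_sech_pow (n : ℕ) (hn : 1 ≤ n) (x : ℝ) :
    HasDerivAt (fun x => sech x ^ n) (-(n : ℝ) * Real.sinh x * sech x ^ (n + 1)) x := by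
  have h : HasDerivAt (fun x => sech x ^ n) _ x := (hasDerivAt_sech x).pow n
  convert h using 1
  have hp : sech x ^ (n - 1) * sech x ^ 2 = sech x ^ (n + 1) := by
    rw [← pow_add]; congr 1; omega
  rw [← hp]; ring

lemma hasDerivAt_sech_pow_deriv (n : ℕ) (hn : 1 ≤ n) (x : ℝ) :
    HasDerivAt (fun x => -(n : ℝ) * Real.sinh x * sech x ^ (n + 1))
      ((n : ℝ) ^ 2 * sech x ^ n - (n : ℝ) * ((n : ℝ) + 1) * sech x ^ (n + 2)) x := by
  have h : HasDerivAt (fun y => -(n : ℝ) * (Real.sinh y * sech y ^ (n + 1))) _ x :=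
    ((Real.hasDerivAt_sinh x).mul (hasDerivAt_sech_pow (n + 1) (by omega) x)).const_mul
    (-(n : ℝ))
  have hfun : (fun y => -(n : ℝ) * (Real.sinh y * sech y ^ (n + 1)))
      = fun x => -(n : ℝ) * Real.sinh x * sech x ^ (n + 1) := by funext y; ring
  rw [hfun] at h
  convert h using 1
  have hc := (Real.cosh_pos x).ne'
  have hs2 : Real.sinh x ^ 2 = Real.cosh x ^ 2 - 1 := by
    nlinarith [Real.cosh_sq_sub_sinh_sq x]
  have e1 : Real.cosh x * sech x ^ (n + 1) = sech x ^ n := by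
    rw [sech, pow_succ]; field_simp
  have e2 : Real.sinh x ^ 2 * sech x ^ (n + 2) = sech x ^ n - sech x ^ (n + 2) := by
    rw [hs2, sech, pow_add (Real.cosh x)⁻¹ n 2]; field_simp
  push_cast
  linear_combination (n : ℝ) * e1 - (n : ℝ) * ((n : ℝ) + 1) * e2

section base
variable (ξ : ℝ)

private noncomputable def φ (y : ℝ) : ℝ := Real.exp (2*y) / (1 + Real.exp (2*y))

lemma phi_hasDerivAt (y : ℝ) :
    HasDerivAt φ (2 * Real.exp (2*y) / (1 + Real.exp (2*y))^2) y := by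
  have h1 : HasDerivAt (fun y : ℝ => Real.exp (2*y)) (2 * Real.exp (2*y)) y := by
    simpa [mul_comm] using ((hasDerivAt_id y).const_mul 2).exp
  have h3 : HasDerivAt (fun y => Real.exp (2*y) / (1 + Real.exp (2*y))) _ y :=
    h1.div (h1.const_add 1) (by positivity)
  convert h3 using 1
  · rfl
  have hA := Real.exp_pos (2*y)
  field_simp
  ring

lemma phi_strictMono : StrictMono φ := by
  intro a b hab
  have hA : (0:ℝ) < Real.exp (2*a) := Real.exp_pos _
  have hB : (0:ℝ) < Real.exp (2*b) := Real.exp_pos _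
  have h : Real.exp (2*a) < Real.exp (2*b) := Real.exp_lt_exp.mpr (by linarith)
  rw [φ, φ, div_lt_div_iff₀ (by positivity) (by positivity)]
  nlinarith

lemma phi_image : φ '' Set.univ = Set.Ioo (0:ℝ) 1 := by
  ext x
  constructor
  · rintro ⟨y, -, rfl⟩
    have hA : (0:ℝ) < Real.exp (2*y) := Real.exp_pos _
    exact ⟨by rw [φ]; positivity, by rw [φ, div_lt_one (by positivity)]; linarith⟩
  · rintro ⟨hx0, hx1⟩
    refine ⟨Real.log (x / (1-x)) / 2, trivial, ?_⟩
    have ht : (0:ℝ) < x / (1-x) := div_pos hx0 (by linarith)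
    have he : Real.exp (2 * (Real.log (x / (1-x)) / 2)) = x / (1-x) := by
      rw [show 2 * (Real.log (x / (1-x)) / 2) = Real.log (x/(1-x)) by ring,
        Real.exp_log ht]
    rw [φ, he]
    have h1x : (1:ℝ) - x ≠ 0 := by linarith
    field_simp
    ring

lemma fourier_sech :
    (∫ x : ℝ, Complex.exp (-(Complex.I) * (x:ℂ) * (ξ:ℂ)) * ((sech x : ℝ) : ℂ))
      = ((π * sech (π * ξ / 2) : ℝ) : ℂ) := by
  set u : ℂ := (1 - Complex.I * ξ) / 2 with hu_def
  set v : ℂ := (1 + Complex.I * ξ) / 2 with hv_def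
  have hure : 0 < u.re := by
    rw [hu_def]
    simp [Complex.div_re, Complex.sub_re, Complex.mul_re]
  have hvre : 0 < v.re := by
    rw [hv_def]
    simp [Complex.div_re, Complex.add_re, Complex.mul_re]
  -- Step 1: the beta integral equals our Fourier integral
  have hbeta : Complex.betaIntegral u v
      = ∫ x : ℝ, Complex.exp (-(Complex.I) * (x:ℂ) * (ξ:ℂ)) * ((sech x : ℝ) : ℂ) := by
    rw [Complex.betaIntegral, intervalIntegral.integral_of_le zero_le_one,
      MeasureTheory.integral_Ioc_eq_integral_Ioo, ← phi_image,
      integral_image_eq_integral_abs_deriv_smul MeasurableSet.univ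
        (fun y _ => (phi_hasDerivAt y).hasDerivWithinAt) (phi_strictMono.injective.injOn),
      Measure.restrict_univ]
    congr 1
    funext y
    set A : ℝ := Real.exp (2*y) with hA_def
    have hA : (0:ℝ) < A := Real.exp_pos _
    set B : ℝ := 1 + A with hB_def
    have hB : (0:ℝ) < B := by positivity
    set L : ℝ := Real.log B with hL_def
    have hφy : φ y = A / B := rfl
    have hAB : (0:ℝ) < A / B := div_pos hA hB
    have h1 : ((φ y : ℝ) : ℂ) ^ (u-1) = Complex.exp ((2*y - L : ℝ) * (u-1)) := by
      rw [hφy, Complex.cpow_def_of_ne_zero (by exact_mod_cast hAB.ne')]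
      congr 2
      rw [← Complex.ofReal_log hAB.le]
      congr 1
      rw [Real.log_div hA.ne' hB.ne', hA_def, Real.log_exp]
    have h2 : ((1:ℂ) - ((φ y : ℝ) : ℂ)) ^ (v-1) = Complex.exp ((-L : ℝ) * (v-1)) := by
      have e : (1:ℂ) - ((φ y : ℝ) : ℂ) = ((1/B : ℝ) : ℂ) := by
        rw [hφy]
        push_cast
        have : (B:ℂ) ≠ 0 := by exact_mod_cast hB.ne'
        field_simp
        rw [hB_def]; push_cast; ring
      rw [e, Complex.cpow_def_of_ne_zero (by exact_mod_cast (one_div_pos.mpr hB).ne')]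
      congr 2
      rw [← Complex.ofReal_log (one_div_pos.mpr hB).le]
      congr 1
      rw [one_div, Real.log_inv]
    rw [h1, h2, ← Complex.exp_add]
    have hexp : ((2*y - L : ℝ) : ℂ) * (u-1) + ((-L : ℝ) : ℂ) * (v-1)
        = ((L - y : ℝ) : ℂ) + (-(Complex.I) * (y:ℂ) * (ξ:ℂ)) := by
      rw [hu_def, hv_def]; push_cast; ring
    rw [hexp, Complex.exp_add, ← Complex.ofReal_exp]
    have hre : Real.exp (L - y) = B * Real.exp (-y) := by
      rw [Real.exp_sub, hL_def, Real.exp_log hB, Real.exp_neg, div_eq_mul_inv]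
    have habs : |2 * Real.exp (2*y) / (1 + Real.exp (2*y))^2| = 2 * A / B^2 := by
      rw [abs_of_pos (by positivity)]
    have hsech : (2 * A / B^2) * (B * Real.exp (-y)) = sech y := by
      rw [sech, Real.cosh_eq]
      have hEy : Real.exp y ≠ 0 := (Real.exp_pos y).ne'
      have hA2 : A = Real.exp y * Real.exp y := by
        rw [hA_def, ← Real.exp_add]; ring_nf
      have hNy : Real.exp (-y) = (Real.exp y)⁻¹ := Real.exp_neg y
      rw [hB_def, hA2, hNy]
      field_simp
      ring
    rw [habs, hre, Complex.real_smul, ← hsech]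
    push_cast
    ring
  -- Step 2: evaluate the beta integral via Gamma
  have huv : u + v = 1 := by rw [hu_def, hv_def]; ring
  have hGamma : Complex.Gamma u * Complex.Gamma v = Complex.betaIntegral u v := by
    have h := Complex.Gamma_mul_Gamma_eq_betaIntegral hure hvre
    rwa [huv, Complex.Gamma_one, one_mul] at h
  have hv1u : (1:ℂ) - u = v := by rw [hu_def, hv_def]; ring
  have hrefl : Complex.Gamma u * Complex.Gamma v = (π:ℂ) / Complex.sin ((π:ℂ) * u) := by
    rw [← hv1u]; exact Complex.Gamma_mul_Gamma_one_sub u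
  have hsin : Complex.sin ((π:ℂ) * u) = ((Real.cosh (π * ξ / 2) : ℝ) : ℂ) := by
    have harg : (π:ℂ) * u = (π:ℂ)/2 - ((π * ξ / 2 : ℝ) : ℂ) * Complex.I := by
      rw [hu_def]; push_cast; ring
    rw [harg, Complex.sin_pi_div_two_sub, Complex.cos_mul_I, Complex.ofReal_cosh]
  have hcosh : Real.cosh (π * ξ / 2) ≠ 0 := (Real.cosh_pos _).ne'
  rw [← hbeta, ← hGamma, hrefl, hsin, sech]
  push_cast
  rw [div_eq_mul_inv]









lemma norm_kernel (x ξ : ℝ) : ‖Complex.exp (-(Complex.I) * (x:ℂ) * (ξ:ℂ))‖ = 1 := by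
  rw [Complex.norm_exp]
  simp

lemma integrable_sech_pow_complex (n : ℕ) (hn : 1 ≤ n) :
    Integrable (fun x : ℝ => ((sech x ^ n : ℝ) : ℂ)) := by
  refine integrable_of_bound (Complex.continuous_ofReal.comp (continuous_sech.pow n)) 1 ?_
  intro x
  rw [Complex.norm_real, Real.norm_eq_abs, abs_of_pos (pow_pos (sech_pos x) n), one_mul]
  exact sech_pow_le hn x

lemma integrable_kernel_sech_pow (n : ℕ) (hn : 1 ≤ n) (ξ : ℝ) :
    Integrable (fun x : ℝ => Complex.exp (-(Complex.I) * (x:ℂ) * (ξ:ℂ)) * ((sech x ^ n : ℝ) : ℂ)) := by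
  refine integrable_of_bound ?_ 1 ?_
  · apply Continuous.mul
    · apply Complex.continuous_exp.comp
      continuity
    · exact Complex.continuous_ofReal.comp (continuous_sech.pow n)
  · intro x
    rw [norm_mul, norm_kernel, one_mul, Complex.norm_real, Real.norm_eq_abs,
      abs_of_pos (pow_pos (sech_pos x) n), one_mul]
    exact sech_pow_le hn x

lemma integrable_g (n : ℕ) (hn : 1 ≤ n) :
    Integrable (fun x : ℝ => ((-(n : ℝ) * Real.sinh x * sech x ^ (n + 1) : ℝ) : ℂ)) := by
  refine integrable_of_bound ?_ (n : ℝ) ?_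
  · exact Complex.continuous_ofReal.comp
      (((continuous_const.mul Real.continuous_sinh).mul (continuous_sech.pow (n+1))))
  · intro x
    rw [Complex.norm_real, Real.norm_eq_abs]
    have h1 : |(-(n : ℝ) * Real.sinh x * sech x ^ (n + 1))|
        = (n : ℝ) * |Real.sinh x| * sech x ^ (n + 1) := by
      rw [abs_mul, abs_mul, abs_neg, Nat.abs_cast, abs_of_pos (pow_pos (sech_pos x) _)]
    rw [h1]
    have h2 : |Real.sinh x| * sech x ^ (n+1) ≤ sech x ^ n := by
      have : |Real.sinh x| * sech x ^ (n+1) ≤ Real.cosh x * sech x ^ (n+1) := by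
        apply mul_le_mul_of_nonneg_right (abs_sinh_le_cosh x) (pow_pos (sech_pos x) _).le
      refine this.trans ?_
      rw [sech, pow_succ]
      rw [mul_comm (((Real.cosh x)⁻¹)^n) _, ← mul_assoc, mul_inv_cancel₀ (Real.cosh_pos x).ne',
        one_mul]
    calc (n : ℝ) * |Real.sinh x| * sech x ^ (n + 1)
        = (n : ℝ) * (|Real.sinh x| * sech x ^ (n + 1)) := by ring
      _ ≤ (n : ℝ) * sech x ^ n := by
          exact mul_le_mul_of_nonneg_left h2 (Nat.cast_nonneg n)
      _ ≤ (n : ℝ) * (2 * Real.exp (-|x|)) := by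
          exact mul_le_mul_of_nonneg_left (sech_pow_le hn x) (Nat.cast_nonneg n)

lemma fourier_eq (F : ℝ → ℂ) (ξ : ℝ) :
    FourierTransform.fourier F (ξ / (2 * π))
      = ∫ x : ℝ, Complex.exp (-(Complex.I) * (x:ℂ) * (ξ:ℂ)) * F x := by
  rw [Real.fourier_real_eq_integral_exp_smul]
  congr 1
  funext x
  rw [smul_eq_mul]
  congr 2
  have h : -2 * π * x * (ξ / (2 * π)) = -(x * ξ) := by
    field_simp
  rw [h]
  push_cast
  ring

lemma sech_recursion (n : ℕ) (hn : 1 ≤ n) (ξ : ℝ) :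
    (∫ x : ℝ, Complex.exp (-(Complex.I) * (x:ℂ) * (ξ:ℂ)) * ((sech x ^ (n + 2) : ℝ) : ℂ))
      = ((((n:ℝ)^2 + ξ^2) / ((n:ℝ) * ((n:ℝ)+1)) : ℝ) : ℂ)
        * ∫ x : ℝ, Complex.exp (-(Complex.I) * (x:ℂ) * (ξ:ℂ)) * ((sech x ^ n : ℝ) : ℂ) := by
  set f : ℝ → ℂ := fun x => ((sech x ^ n : ℝ) : ℂ) with hf_def
  set g : ℝ → ℂ := fun x => ((-(n : ℝ) * Real.sinh x * sech x ^ (n + 1) : ℝ) : ℂ) with hg_def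
  have hfd : ∀ x, HasDerivAt f (g x) x := fun x =>
    (hasDerivAt_sech_pow n hn x).ofReal_comp
  have hgd : ∀ x, HasDerivAt g
      ((((n : ℝ) ^ 2 * sech x ^ n - (n : ℝ) * ((n : ℝ) + 1) * sech x ^ (n + 2) : ℝ) : ℂ)) x :=
    fun x => (hasDerivAt_sech_pow_deriv n hn x).ofReal_comp
  have hderiv_f : deriv f = g := funext fun x => (hfd x).deriv
  have hderiv_g : deriv g = fun x =>
      (((n : ℝ) ^ 2 * sech x ^ n - (n : ℝ) * ((n : ℝ) + 1) * sech x ^ (n + 2) : ℝ) : ℂ) :=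
    funext fun x => (hgd x).deriv
  have hint_f : Integrable f := integrable_sech_pow_complex n hn
  have hint_g : Integrable g := integrable_g n hn
  have hint_h : Integrable (deriv g) := by
    rw [hderiv_g]
    have e : (fun x => (((n:ℝ)^2 * sech x ^ n - (n:ℝ)*((n:ℝ)+1) * sech x ^ (n+2) : ℝ) : ℂ))
        = fun x => (((n:ℝ)^2 : ℝ) : ℂ) * ((sech x ^ n : ℝ) : ℂ)
            - ((((n:ℝ)*((n:ℝ)+1) : ℝ)) : ℂ) * ((sech x ^ (n+2) : ℝ) : ℂ) := by
      funext x; push_cast; ring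
    rw [e]
    exact ((integrable_sech_pow_complex n hn).const_mul _).sub
      ((integrable_sech_pow_complex (n+2) (by omega)).const_mul _)
  have hdf : Differentiable ℝ f := fun x => (hfd x).differentiableAt
  have hdg : Differentiable ℝ g := fun x => (hgd x).differentiableAt
  have F1 : FourierTransform.fourier g
      = fun w : ℝ => ((2 * (π:ℂ) * Complex.I * (w:ℂ)) • FourierTransform.fourier f w) := by
    rw [← hderiv_f]
    exact Real.fourier_deriv hint_f hdf (by rw [hderiv_f]; exact hint_g)
  have F2 : FourierTransform.fourier (deriv g)
      = fun w : ℝ => ((2 * (π:ℂ) * Complex.I * (w:ℂ)) • FourierTransform.fourier g w) :=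
    Real.fourier_deriv hint_g hdg hint_h
  set w0 : ℝ := ξ / (2 * π) with hw0_def
  have hw : 2 * (π:ℂ) * Complex.I * ((w0:ℝ):ℂ) = Complex.I * (ξ:ℂ) := by
    rw [hw0_def]
    push_cast
    have hpi : ((π:ℝ):ℂ) ≠ 0 := by exact_mod_cast Real.pi_ne_zero
    field_simp
  have key : FourierTransform.fourier (deriv g) w0
      = (Complex.I * (ξ:ℂ)) * ((Complex.I * (ξ:ℂ)) * FourierTransform.fourier f w0) := by
    rw [F2]
    simp only
    rw [F1]
    simp only [smul_eq_mul, hw]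
  rw [hderiv_g] at key
  rw [_root_.fourier_eq, _root_.fourier_eq] at key
  set In : ℂ := ∫ x : ℝ, Complex.exp (-(Complex.I) * (x:ℂ) * (ξ:ℂ)) * ((sech x ^ n : ℝ) : ℂ)
    with hIn_def
  set In2 : ℂ := ∫ x : ℝ, Complex.exp (-(Complex.I) * (x:ℂ) * (ξ:ℂ)) * ((sech x ^ (n+2) : ℝ) : ℂ)
    with hIn2_def
  have split : (∫ x : ℝ, Complex.exp (-(Complex.I) * (x:ℂ) * (ξ:ℂ))
        * (((n : ℝ) ^ 2 * sech x ^ n - (n : ℝ) * ((n : ℝ) + 1) * sech x ^ (n + 2) : ℝ) : ℂ))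
      = ((n:ℂ))^2 * In - ((n:ℂ) * ((n:ℂ)+1)) * In2 := by
    have e : ∀ x : ℝ, Complex.exp (-(Complex.I) * (x:ℂ) * (ξ:ℂ))
          * (((n : ℝ) ^ 2 * sech x ^ n - (n : ℝ) * ((n : ℝ) + 1) * sech x ^ (n + 2) : ℝ) : ℂ)
        = ((n:ℂ))^2 * (Complex.exp (-(Complex.I) * (x:ℂ) * (ξ:ℂ)) * ((sech x ^ n : ℝ) : ℂ))
          - ((n:ℂ) * ((n:ℂ)+1))
            * (Complex.exp (-(Complex.I) * (x:ℂ) * (ξ:ℂ)) * ((sech x ^ (n+2) : ℝ) : ℂ)) := by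
      intro x; push_cast; ring
    simp_rw [e]
    rw [integral_sub (((integrable_kernel_sech_pow n hn ξ)).const_mul _)
        (((integrable_kernel_sech_pow (n+2) (by omega) ξ)).const_mul _),
      integral_const_mul, integral_const_mul]
  rw [split] at key
  have hn0 : ((n:ℂ)) ≠ 0 := Nat.cast_ne_zero.mpr (by omega)
  have hn1 : ((n:ℂ)) + 1 ≠ 0 := by
    have : (((n+1 : ℕ)):ℂ) ≠ 0 := Nat.cast_ne_zero.mpr (by omega)
    push_cast at this; exact this
  have hI2 : (Complex.I * (ξ:ℂ)) * ((Complex.I * (ξ:ℂ)) * In) = -((ξ:ℂ)^2) * In := by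
    have : Complex.I * (ξ:ℂ) * (Complex.I * (ξ:ℂ)) = -((ξ:ℂ)^2) := by
      rw [mul_mul_mul_comm, Complex.I_mul_I]; ring
    rw [← mul_assoc, this]
  rw [hI2] at key
  push_cast
  rw [div_mul_eq_mul_div, eq_div_iff (mul_ne_zero hn0 hn1)]
  linear_combination (-1 : ℂ) * key


lemma main_identity (ξ : ℝ) :
    (∫ x : ℝ, Complex.exp (-(Complex.I) * (x : ℂ) * (ξ : ℂ))
        * ((240 * sech x ^ 3 - 3720 * sech x ^ 5 + 9960 * sech x ^ 7
            - 6720 * sech x ^ 9 : ℝ) : ℂ))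
      = (((π / 6) * (1 - ξ ^ 2) * ξ ^ 2 * (1 + ξ ^ 2) ^ 2 * sech (π * ξ / 2) : ℝ) : ℂ) := by
  have K1 := fourier_sech ξ
  have K3 := sech_recursion 1 le_rfl ξ
  have K5 := sech_recursion 3 (by norm_num) ξ
  have K7 := sech_recursion 5 (by norm_num) ξ
  have K9 := sech_recursion 7 (by norm_num) ξ
  norm_num at K3 K5 K7 K9
  have e : ∀ x : ℝ, Complex.exp (-(Complex.I) * (x : ℂ) * (ξ : ℂ))
        * ((240 * sech x ^ 3 - 3720 * sech x ^ 5 + 9960 * sech x ^ 7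
            - 6720 * sech x ^ 9 : ℝ) : ℂ)
      = 240 * (Complex.exp (-(Complex.I) * (x : ℂ) * (ξ : ℂ)) * ((sech x ^ 3 : ℝ) : ℂ))
        - 3720 * (Complex.exp (-(Complex.I) * (x : ℂ) * (ξ : ℂ)) * ((sech x ^ 5 : ℝ) : ℂ))
        + 9960 * (Complex.exp (-(Complex.I) * (x : ℂ) * (ξ : ℂ)) * ((sech x ^ 7 : ℝ) : ℂ))
        - 6720 * (Complex.exp (-(Complex.I) * (x : ℂ) * (ξ : ℂ)) * ((sech x ^ 9 : ℝ) : ℂ)) := by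
    intro x; push_cast; ring
  simp_rw [e]
  have i3 := (integrable_kernel_sech_pow 3 (by norm_num) ξ).const_mul (240 : ℂ)
  have i5 := (integrable_kernel_sech_pow 5 (by norm_num) ξ).const_mul (3720 : ℂ)
  have i7 := (integrable_kernel_sech_pow 7 (by norm_num) ξ).const_mul (9960 : ℂ)
  have i9 := (integrable_kernel_sech_pow 9 (by norm_num) ξ).const_mul (6720 : ℂ)
  have i35 : Integrable (fun x : ℝ => 240 * (Complex.exp (-(Complex.I) * (x : ℂ) * (ξ : ℂ)) * ((sech x ^ 3 : ℝ) : ℂ)) - 3720 * (Complex.exp (-(Complex.I) * (x : ℂ) * (ξ : ℂ)) * ((sech x ^ 5 : ℝ) : ℂ))) volume := i3.sub i5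
  have i357 : Integrable (fun x : ℝ => 240 * (Complex.exp (-(Complex.I) * (x : ℂ) * (ξ : ℂ)) * ((sech x ^ 3 : ℝ) : ℂ)) - 3720 * (Complex.exp (-(Complex.I) * (x : ℂ) * (ξ : ℂ)) * ((sech x ^ 5 : ℝ) : ℂ)) + 9960 * (Complex.exp (-(Complex.I) * (x : ℂ) * (ξ : ℂ)) * ((sech x ^ 7 : ℝ) : ℂ))) volume := i35.add i7
  rw [integral_sub i357 i9, integral_add i35 i7, integral_sub i3 i5,
    integral_const_mul, integral_const_mul, integral_const_mul, integral_const_mul]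
  simp only [Complex.ofReal_pow, neg_mul] at K1 K3 K5 K7 K9 ⊢
  rw [K9, K7, K5, K3, K1]
  push_cast
  ring

/-- Null structure (Lemma 1.6): the Fourier transform of
`F₁ + F₂ = 240 sech³ − 3720 sech⁵ + 9960 sech⁷ − 6720 sech⁹` equals
`(π/6)(1 − ξ²) ξ² (1 + ξ²)² sech(π ξ/2)`; in particular it vanishes at `ξ = ±1`. -/
theorem null_structure_fourier_transform :
    (∀ ξ : ℝ,
      (∫ x : ℝ, Complex.exp (-(Complex.I) * (x : ℂ) * (ξ : ℂ))
          * ((240 * sech x ^ 3 - 3720 * sech x ^ 5 + 9960 * sech x ^ 7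
              - 6720 * sech x ^ 9 : ℝ) : ℂ))
        = (((π / 6) * (1 - ξ ^ 2) * ξ ^ 2 * (1 + ξ ^ 2) ^ 2 * sech (π * ξ / 2) : ℝ) : ℂ)) ∧
    (∫ x : ℝ, Complex.exp (-(Complex.I) * (x : ℂ) * ((1 : ℝ) : ℂ))
        * ((240 * sech x ^ 3 - 3720 * sech x ^ 5 + 9960 * sech x ^ 7
            - 6720 * sech x ^ 9 : ℝ) : ℂ)) = 0 ∧
    (∫ x : ℝ, Complex.exp (-(Complex.I) * (x : ℂ) * ((-1 : ℝ) : ℂ))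
        * ((240 * sech x ^ 3 - 3720 * sech x ^ 5 + 9960 * sech x ^ 7
            - 6720 * sech x ^ 9 : ℝ) : ℂ)) = 0 := by
  refine ⟨main_identity, ?_, ?_⟩
  · rw [main_identity 1]; norm_num
  · rw [main_identity (-1)]; norm_num
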